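/- If S is a countably infinite weakly cancellative semigroup, then the collection Θ_S of S-thick sets is a dense Gδ (hence comeager) subset of 2^S. -/

import Mathlib

open Set Filter

attribute [local instance] Ultrafilter.mul Ultrafilter.semigroup

def Thick {S : Type*} [Semigroup S] (A : Set S) : Prop :=
  ∀ F : Finset S, ∃ t : S, ∀ f ∈ F, f * t ∈ A

theorem thick_dense_Gδ {S : Type*} [Semigroup S] [Countable S] [Infinite S]
    (hwc : ∀ s t : S, {x | s * x = t}.Finite ∧ {x | x * s = t}.Finite) :
    IsGδ {f : S → Bool | Thick {s | f s = true}} ∧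
      Dense {f : S → Bool | Thick {s | f s = true}} := by
  classical
  set U : Finset S → Set (S → Bool) :=
    fun F => {f | ∃ t : S, ∀ s ∈ F, f (s * t) = true} with hU
  have hset : {f : S → Bool | Thick {s | f s = true}} = ⋂ F : Finset S, U F := by
    ext f
    simp only [mem_iInter, hU, mem_setOf_eq, Thick]

  have hopen : ∀ F, IsOpen (U F) := by
    intro F
    have : U F = ⋃ t : S, ⋂ s ∈ F, {f : S → Bool | f (s * t) = true} := by
      ext f; simp [hU]
    rw [this]
    refine isOpen_iUnion fun t => isOpen_biInter_finset fun s _ => ?_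
    exact IsOpen.preimage (continuous_apply (A := fun _ : S => Bool) (s * t)) (isOpen_discrete {b : Bool | b = true})
  have hdense : ∀ F, Dense (U F) := by
    intro F
    rw [dense_iff_inter_open]
    intro V hV ⟨f, hf⟩
    obtain ⟨I, u, hIu, hsub⟩ := isOpen_pi_iff.1 hV f hf
    -- find t with s * t ∉ I for all s ∈ F
    have hfin : (⋃ s ∈ F, ⋃ g ∈ I, {x : S | s * x = g}).Finite := by
      refine Set.Finite.biUnion F.finite_toSet fun s _ => ?_
      exact Set.Finite.biUnion I.finite_toSet fun g _ => (hwc s g).1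
    obtain ⟨t, ht⟩ := hfin.infinite_compl.nonempty
    have htI : ∀ s ∈ F, s * t ∉ I := by
      intro s hs hst
      exact ht (mem_biUnion hs (mem_biUnion hst rfl))
    set g : S → Bool := fun x => if ∃ s ∈ F, s * t = x then true else f x with hg
    refine ⟨g, ?_, ?_⟩
    · apply hsub
      intro i hi
      have : g i = f i := by
        rw [hg]; simp only
        rw [if_neg]
        rintro ⟨s, hs, rfl⟩
        exact htI s hs hi
      rw [this]
      exact (hIu i hi).2
    · exact ⟨t, fun s hs => by rw [hg]; exact if_pos ⟨s, hs, rfl⟩⟩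
  rw [hset]
  exact ⟨IsGδ.iInter_of_isOpen hopen, dense_iInter_of_isOpen hopen hdense⟩
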